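/- Let 0 < ν < 1 and 0 < δ < 1/2, and let S = {ρ e^{it} ∈ ℂ : 0 < ρ < 2^ν, |t| < π(1−δ)}. Then for every ε > 0 there exists a polynomial P with complex coefficients such that P(0) = 1 and ∫_S |P(w)|² |w|^{2(1/ν − 1)} dA(w) < ε. -/

import Mathlib

open MeasureTheory Real

/-- The open sector of radius `2^ν` and half-aperture `π(1-δ)` around the
positive real axis. -/
def sector (ν δ : ℝ) : Set ℂ :=
  {w : ℂ | ∃ ρ t : ℝ, 0 < ρ ∧ ρ < (2 : ℝ) ^ ν ∧ |t| < π * (1 - δ) ∧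
    w = (ρ : ℂ) * Complex.exp (Complex.I * (t : ℂ))}

namespace SectorAux

/-- Uniform polynomial approximability on a set `K`. -/
def SApprox (K : Set ℂ) (g : ℂ → ℂ) : Prop :=
  ∀ η : ℝ, 0 < η → ∃ p : Polynomial ℂ, ∀ w ∈ K, ‖g w - p.eval w‖ ≤ η

lemma sapprox_poly (K : Set ℂ) (p : Polynomial ℂ) : SApprox K (fun w => p.eval w) := by
  intro η hη
  exact ⟨p, fun w _ => by simpa using hη.le⟩

lemma sapprox_add {K : Set ℂ} {g h : ℂ → ℂ} (hg : SApprox K g) (hh : SApprox K h) :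
    SApprox K (fun w => g w + h w) := by
  intro η hη
  obtain ⟨p, hp⟩ := hg (η / 2) (by positivity)
  obtain ⟨q, hq⟩ := hh (η / 2) (by positivity)
  refine ⟨p + q, fun w hw => ?_⟩
  have hrw : g w + h w - (p + q).eval w
      = (g w - p.eval w) + (h w - q.eval w) := by
    simp only [Polynomial.eval_add]; ring
  rw [hrw]
  calc ‖(g w - p.eval w) + (h w - q.eval w)‖
      ≤ ‖g w - p.eval w‖ + ‖h w - q.eval w‖ := norm_add_le _ _
    _ ≤ η := by linarith [hp w hw, hq w hw]

lemma sapprox_const_mul {K : Set ℂ} {g : ℂ → ℂ} (a : ℂ) (hg : SApprox K g) :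
    SApprox K (fun w => a * g w) := by
  intro η hη
  obtain ⟨p, hp⟩ := hg (η / (‖a‖ + 1)) (by positivity)
  refine ⟨Polynomial.C a * p, fun w hw => ?_⟩
  have hrw : a * g w - (Polynomial.C a * p).eval w = a * (g w - p.eval w) := by
    simp only [Polynomial.eval_mul, Polynomial.eval_C]; ring
  rw [hrw, norm_mul]
  have h1 := hp w hw
  have h2 : ‖a‖ * (η / (‖a‖ + 1)) ≤ η := by
    rw [div_eq_inv_mul]
    have hpos : (0:ℝ) < ‖a‖ + 1 := by positivity
    rw [mul_comm ((‖a‖ + 1)⁻¹) η, ← mul_assoc]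
    have : ‖a‖ * (‖a‖ + 1)⁻¹ ≤ 1 := by
      rw [mul_inv_le_iff₀ hpos]; linarith [norm_nonneg a]
    nlinarith [hη.le]
  calc ‖a‖ * ‖g w - p.eval w‖
      ≤ ‖a‖ * (η / (‖a‖ + 1)) := by
        exact mul_le_mul_of_nonneg_left h1 (norm_nonneg a)
    _ ≤ η := h2

lemma sapprox_mul {K : Set ℂ} {g h : ℂ → ℂ} {M N : ℝ} (hM0 : 0 ≤ M) (hN0 : 0 ≤ N)
    (hg : SApprox K g) (hh : SApprox K h)
    (hgb : ∀ w ∈ K, ‖g w‖ ≤ M) (hhb : ∀ w ∈ K, ‖h w‖ ≤ N) :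
    SApprox K (fun w => g w * h w) := by
  intro η hη
  obtain ⟨p, hp⟩ := hg (min 1 (η / (2 * (N + 1)))) (by positivity)
  obtain ⟨q, hq⟩ := hh (η / (2 * (M + 1))) (by positivity)
  refine ⟨p * q, fun w hw => ?_⟩
  have h1 := hp w hw
  have h2 := hq w hw
  have hpb : ‖p.eval w‖ ≤ M + 1 := by
    have htr := norm_add_le (p.eval w - g w) (g w)
    rw [sub_add_cancel] at htr
    rw [norm_sub_rev] at htr
    have hgw := hgb w hw
    have hm1 : ‖g w - p.eval w‖ ≤ 1 := h1.trans (min_le_left _ _)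
    linarith
  have hrw : g w * h w - (p * q).eval w
      = (g w - p.eval w) * h w + p.eval w * (h w - q.eval w) := by
    simp only [Polynomial.eval_mul]; ring
  rw [hrw]
  have hN1 : (0:ℝ) < N + 1 := by linarith
  have hM1 : (0:ℝ) < M + 1 := by linarith
  calc ‖(g w - p.eval w) * h w + p.eval w * (h w - q.eval w)‖
      ≤ ‖(g w - p.eval w) * h w‖ + ‖p.eval w * (h w - q.eval w)‖ :=
        norm_add_le _ _
    _ = ‖g w - p.eval w‖ * ‖h w‖
        + ‖p.eval w‖ * ‖h w - q.eval w‖ := by rw [norm_mul, norm_mul]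
    _ ≤ (η / (2 * (N + 1))) * N + (M + 1) * (η / (2 * (M + 1))) := by
        have e1 : ‖g w - p.eval w‖ * ‖h w‖ ≤ (η / (2 * (N + 1))) * N := by
          apply mul_le_mul (h1.trans (min_le_right _ _)) (hhb w hw) (norm_nonneg _)
          positivity
        have e2 : ‖p.eval w‖ * ‖h w - q.eval w‖
            ≤ (M + 1) * (η / (2 * (M + 1))) := by
          apply mul_le_mul hpb h2 (norm_nonneg _) (by linarith)
        linarith
    _ ≤ η / 2 + η / 2 := by
        have e3 : (η / (2 * (N + 1))) * N ≤ η / 2 := by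
          rw [div_mul_eq_mul_div, div_le_div_iff₀ (by positivity) (by norm_num)]
          nlinarith
        have e4 : (M + 1) * (η / (2 * (M + 1))) = η / 2 := by
          field_simp
        linarith
    _ = η := by ring

lemma sapprox_fix {K : Set ℂ} {x β φ : ℂ → ℂ} {Mβ : ℝ} (hMβ : 0 ≤ Mβ)
    (hβ : SApprox K β) (hφ : SApprox K φ)
    (hβb : ∀ w ∈ K, ‖β w‖ ≤ Mβ)
    (hφb : ∀ w ∈ K, ‖φ w‖ ≤ 1 / 2)
    (hx : ∀ w ∈ K, x w = β w + φ w * x w) :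
    SApprox K x := by
  have hxb : ∀ w ∈ K, ‖x w‖ ≤ 2 * Mβ := by
    intro w hw
    have h1 : ‖x w‖ = ‖β w + φ w * x w‖ := by rw [← hx w hw]
    have h2 : ‖β w + φ w * x w‖
        ≤ ‖β w‖ + ‖φ w‖ * ‖x w‖ := by
      calc ‖β w + φ w * x w‖
          ≤ ‖β w‖ + ‖φ w * x w‖ := norm_add_le _ _
        _ = ‖β w‖ + ‖φ w‖ * ‖x w‖ := by rw [norm_mul]
    have h3 := hβb w hw
    have h4 := hφb w hw
    have h5 := norm_nonneg (x w)
    nlinarith [h1, h2]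
  -- iterates
  set xs : ℕ → ℂ → ℂ := fun n =>
    Nat.rec (fun _ => (0:ℂ)) (fun _ u w => β w + φ w * u w) n with hxs_def
  have hxs0 : ∀ w, xs 0 w = 0 := fun w => rfl
  have hxsS : ∀ n w, xs (n + 1) w = β w + φ w * xs n w := fun n w => rfl
  have happrox : ∀ n, SApprox K (xs n) ∧ ∀ w ∈ K, ‖xs n w‖ ≤ 2 * Mβ := by
    intro n
    induction n with
    | zero =>
      constructor
      · intro η hη
        refine ⟨0, fun w hw => ?_⟩
        simp [hxs0 w, hη.le]
      · intro w hw; simp [hxs0 w]; positivity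
    | succ n ih =>
      obtain ⟨ih1, ih2⟩ := ih
      constructor
      · have hmul := sapprox_mul (M := 1/2) (N := 2 * Mβ) (by norm_num) (by positivity)
          hφ ih1 hφb ih2
        have hadd := sapprox_add hβ hmul
        intro η hη
        obtain ⟨p, hp⟩ := hadd η hη
        exact ⟨p, fun w hw => by rw [hxsS n w]; exact hp w hw⟩
      · intro w hw
        rw [hxsS n w]
        calc ‖β w + φ w * xs n w‖
            ≤ ‖β w‖ + ‖φ w‖ * ‖xs n w‖ := by
              calc ‖β w + φ w * xs n w‖
                  ≤ ‖β w‖ + ‖φ w * xs n w‖ := norm_add_le _ _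
                _ = _ := by rw [norm_mul]
          _ ≤ Mβ + (1/2) * (2 * Mβ) := by
              have := hβb w hw
              have h4 := hφb w hw
              have h5 := norm_nonneg (xs n w)
              have h6 := norm_nonneg (φ w)
              nlinarith [ih2 w hw]
          _ = 2 * Mβ := by ring
  have herr : ∀ n, ∀ w ∈ K, ‖x w - xs n w‖ ≤ (1/2 : ℝ)^n * (2 * Mβ) := by
    intro n
    induction n with
    | zero =>
      intro w hw
      simp only [hxs0 w, sub_zero, pow_zero, one_mul]
      exact hxb w hw
    | succ n ih =>
      intro w hw
      have hrw : x w - xs (n+1) w = φ w * (x w - xs n w) := by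
        conv_lhs => rw [hx w hw, hxsS n w]
        ring
      rw [hrw, norm_mul]
      calc ‖φ w‖ * ‖x w - xs n w‖
          ≤ (1/2) * ((1/2:ℝ)^n * (2 * Mβ)) := by
            apply mul_le_mul (hφb w hw) (ih w hw) (norm_nonneg _) (by norm_num)
        _ = (1/2:ℝ)^(n+1) * (2 * Mβ) := by ring
  intro η hη
  obtain ⟨n, hn⟩ := exists_pow_lt_of_lt_one
    (show (0:ℝ) < η / (2 * (2 * Mβ + 1)) by positivity) (show (1/2 : ℝ) < 1 by norm_num)
  obtain ⟨p, hp⟩ := (happrox n).1 (η / 2) (by positivity)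
  refine ⟨p, fun w hw => ?_⟩
  calc ‖x w - p.eval w‖
      ≤ ‖x w - xs n w‖ + ‖xs n w - p.eval w‖ :=
        norm_sub_le_norm_sub_add_norm_sub _ _ _
    _ ≤ (1/2:ℝ)^n * (2 * Mβ) + η / 2 := add_le_add (herr n w hw) (hp w hw)
    _ ≤ η := by
        have h1 : (1/2:ℝ)^n * (2 * Mβ) ≤ η / 2 := by
          have h2 : (1/2:ℝ)^n * (2 * Mβ) ≤ (η / (2 * (2 * Mβ + 1))) * (2 * Mβ + 1) := by
            apply mul_le_mul hn.le (by linarith) (by positivity) (by positivity)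
          have h3 : (η / (2 * (2 * Mβ + 1))) * (2 * Mβ + 1) = η / 2 := by
            field_simp
          linarith
        linarith

lemma sapprox_inv {K : Set ℂ} {c R : ℝ} (hc0 : 0 < c) (hc1 : c ≤ 1) (hR : 1 ≤ R)
    (hK1 : ∀ w ∈ K, ‖w‖ ≤ R)
    (hK2 : ∀ σ : ℝ, 0 < σ → ∀ w ∈ K, c * σ ≤ ‖w + (σ:ℂ)‖) :
    ∀ s : ℝ, 0 < s → SApprox K (fun w => (w + (s:ℂ))⁻¹) := by
  have hcc : (0:ℝ) < 1 - c/2 := by linarith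
  have main : ∀ N : ℕ, ∀ s : ℝ, 0 < s → (2*R+1) * (1 - c/2)^N ≤ s →
      SApprox K (fun w => (w + (s:ℂ))⁻¹) := by
    intro N
    induction N with
    | zero =>
      intro s hs0 hs
      rw [pow_zero, mul_one] at hs
      have hne : ∀ w ∈ K, (w + (s:ℂ)) ≠ 0 := by
        intro w hw
        have := hK2 s hs0 w hw
        intro hzero
        rw [hzero] at this
        simp at this
        nlinarith
      apply sapprox_fix (β := fun _ => ((s:ℂ))⁻¹) (φ := fun w => -((s:ℂ))⁻¹ * w)
        (Mβ := 1/s) (by positivity)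
      · have := sapprox_poly K (Polynomial.C ((s:ℂ))⁻¹)
        intro η hη
        obtain ⟨p, hp⟩ := this η hη
        exact ⟨p, fun w hw => by simpa using hp w hw⟩
      · have := sapprox_poly K (Polynomial.C (-((s:ℂ))⁻¹) * Polynomial.X)
        intro η hη
        obtain ⟨p, hp⟩ := this η hη
        refine ⟨p, fun w hw => ?_⟩
        have := hp w hw
        simpa using this
      · intro w hw
        rw [norm_inv, Complex.norm_real, Real.norm_eq_abs, abs_of_pos hs0]
        rw [one_div]
      · intro w hw
        have habs : ‖-((s:ℂ))⁻¹ * w‖ = s⁻¹ * ‖w‖ := by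
          rw [norm_mul, norm_neg, norm_inv, Complex.norm_real, Real.norm_eq_abs, abs_of_pos hs0]
        rw [habs]
        have hwR := hK1 w hw
        have h2 : s⁻¹ * ‖w‖ ≤ s⁻¹ * R :=
          mul_le_mul_of_nonneg_left hwR (by positivity)
        have h3 : s⁻¹ * R ≤ 1/2 := by
          rw [inv_mul_le_iff₀ hs0]
          nlinarith
        linarith
      · intro w hw
        have hne' := hne w hw
        have hsne : ((s:ℝ):ℂ) ≠ 0 := by
          simpa using hs0.ne'
        field_simp
        ring
    | succ N ih =>
      intro s hs0 hs
      set s' : ℝ := s / (1 - c/2) with hs'_def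
      have hs'0 : 0 < s' := by positivity
      have hs' : (2*R+1) * (1 - c/2)^N ≤ s' := by
        rw [hs'_def, le_div_iff₀ hcc]
        calc (2*R+1) * (1 - c/2)^N * (1 - c/2) = (2*R+1) * (1 - c/2)^(N+1) := by ring
          _ ≤ s := hs
      have hinv' := ih s' hs'0 hs'
      set d : ℝ := s' - s with hd_def
      have hss' : s' * (1 - c/2) = s := by
        rw [hs'_def]
        exact div_mul_cancel₀ s hcc.ne'
      have hd : d = (c/2) * s' := by
        rw [hd_def, ← hss']
        ring
      have hd0 : 0 < d := by rw [hd]; positivity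
      have hne : ∀ σ : ℝ, 0 < σ → ∀ w ∈ K, (w + (σ:ℂ)) ≠ 0 := by
        intro σ hσ w hw hzero
        have := hK2 σ hσ w hw
        rw [hzero] at this
        simp at this
        nlinarith
      have hβb : ∀ w ∈ K, ‖(w + (s':ℂ))⁻¹‖ ≤ 1/(c*s') := by
        intro w hw
        rw [norm_inv]
        rw [one_div]
        apply inv_anti₀ (by positivity) (hK2 s' hs'0 w hw)
      apply sapprox_fix (β := fun w => (w + (s':ℂ))⁻¹)
        (φ := fun w => (d:ℂ) * (w + (s':ℂ))⁻¹) (Mβ := 1/(c*s')) (by positivity)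
      · exact hinv'
      · exact sapprox_const_mul (d:ℂ) hinv'
      · exact hβb
      · intro w hw
        rw [norm_mul, Complex.norm_real, Real.norm_eq_abs, abs_of_pos hd0]
        have h1 := hβb w hw
        calc d * ‖(w + (s':ℂ))⁻¹‖ ≤ d * (1/(c*s')) := by
              apply mul_le_mul_of_nonneg_left h1 hd0.le
          _ = 1/2 := by rw [hd]; field_simp
      · intro w hw
        have hne1 := hne s hs0 w hw
        have hne2 := hne s' hs'0 w hw
        have hcast : ((s':ℝ):ℂ) = (s:ℂ) + (d:ℂ) := by
          rw [hd_def]; push_cast; ring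
        rw [hcast] at hne2 ⊢
        field_simp
        ring
  intro s hs0
  obtain ⟨N, hN⟩ := exists_pow_lt_of_lt_one
    (show (0:ℝ) < s / (2*R+1) by positivity) (show 1 - c/2 < 1 by linarith)
  apply main N s hs0
  rw [← le_div_iff₀' (by positivity : (0:ℝ) < 2*R+1)]
  exact hN.le


set_option maxHeartbeats 1000000 in
lemma sector_facts {ν δ : ℝ} (hδ₀ : 0 < δ) (hδ₁ : δ < 1/2) {w : ℂ} (hw : w ∈ sector ν δ) :
    ‖w‖ < (2:ℝ)^ν ∧ (0:ℝ) < ‖w‖ ∧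
    ∀ σ : ℝ, 0 < σ → Real.sqrt (1 - Real.cos (π*δ)) * σ ≤ ‖w + (σ:ℂ)‖ ∧
      Real.sqrt (1 - Real.cos (π*δ)) * ‖w‖ ≤ ‖w + (σ:ℂ)‖ := by
  have hπ := Real.pi_pos
  obtain ⟨ρ, t, hρ0, hρR, ht, rfl⟩ := hw
  have hexp1 : ‖Complex.exp (Complex.I * (t:ℂ))‖ = 1 := by
    rw [Complex.norm_exp]
    simp [Complex.mul_re]
  have habs : ‖(ρ:ℂ) * Complex.exp (Complex.I * (t:ℂ))‖ = ρ := by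
    rw [norm_mul, Complex.norm_real, Real.norm_eq_abs, hexp1, mul_one, abs_of_pos hρ0]
  refine ⟨by rw [habs]; exact hρR, by rw [habs]; exact hρ0, ?_⟩
  intro σ hσ
  set q : ℝ := Real.cos (π * δ) with hq_def
  have hq0 : 0 ≤ q := by
    apply Real.cos_nonneg_of_mem_Icc
    constructor <;> nlinarith
  have hq1 : q < 1 := by
    have h := Real.cos_lt_cos_of_nonneg_of_le_pi (le_refl (0:ℝ)) (by nlinarith : π*δ ≤ π)
      (by nlinarith : (0:ℝ) < π*δ)
    simpa using h
  have hc2 : Real.sqrt (1 - q) ^ 2 = 1 - q := Real.sq_sqrt (by linarith)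
  have hc0 : 0 < Real.sqrt (1 - q) := Real.sqrt_pos.2 (by linarith)
  have hcost : -q ≤ Real.cos t := by
    have h1 : Real.cos (π*(1-δ)) ≤ Real.cos |t| :=
      Real.cos_le_cos_of_nonneg_of_le_pi (abs_nonneg t) (by nlinarith) ht.le
    rw [Real.cos_abs] at h1
    have h2 : Real.cos (π*(1-δ)) = -Real.cos (π*δ) := by
      rw [show π*(1-δ) = π - π*δ by ring, Real.cos_pi_sub]
    rw [h2] at h1
    exact h1
  have hre : (((ρ:ℂ) * Complex.exp (Complex.I * (t:ℂ))) + (σ:ℂ)).re = ρ * Real.cos t + σ := by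
    rw [mul_comm Complex.I ((t:ℂ)), Complex.exp_mul_I]
    simp [Complex.add_re, Complex.mul_re, Complex.add_im, Complex.mul_im, Complex.cos_ofReal_re, Complex.sin_ofReal_re, Complex.cos_ofReal_im, Complex.sin_ofReal_im]
  have him : (((ρ:ℂ) * Complex.exp (Complex.I * (t:ℂ))) + (σ:ℂ)).im = ρ * Real.sin t := by
    rw [mul_comm Complex.I ((t:ℂ)), Complex.exp_mul_I]
    simp [Complex.add_re, Complex.mul_re, Complex.add_im, Complex.mul_im, Complex.cos_ofReal_re, Complex.sin_ofReal_re, Complex.cos_ofReal_im, Complex.sin_ofReal_im]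
  have hsq : (‖((ρ:ℂ) * Complex.exp (Complex.I * (t:ℂ))) + (σ:ℂ)‖)^2
      = (ρ * Real.cos t + σ)^2 + (ρ * Real.sin t)^2 := by
    rw [Complex.sq_norm, Complex.normSq_apply, hre, him]
    ring
  have hpyth := Real.sin_sq_add_cos_sq t
  have habs0 := norm_nonneg (((ρ:ℂ) * Complex.exp (Complex.I * (t:ℂ))) + (σ:ℂ))
  have hexp : (ρ * Real.cos t + σ)^2 + (ρ * Real.sin t)^2
      = ρ^2 + σ^2 + 2*ρ*σ*Real.cos t := by
    have h := hpyth
    nlinarith [h]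
  have hints1 : 0 ≤ 2*ρ*σ*(Real.cos t + q) :=
    mul_nonneg (mul_nonneg (by linarith) hσ.le) (by linarith)
  have hints2 : 0 ≤ q * (ρ - σ)^2 := mul_nonneg hq0 (sq_nonneg (ρ - σ))
  have hints3 : 0 ≤ (1 - q) * ρ^2 := mul_nonneg (by linarith) (sq_nonneg ρ)
  have hints4 : 0 ≤ (1 - q) * σ^2 := mul_nonneg (by linarith) (sq_nonneg σ)
  constructor
  · have hineq : (Real.sqrt (1 - q) * σ)^2
        ≤ (‖((ρ:ℂ) * Complex.exp (Complex.I * (t:ℂ))) + (σ:ℂ)‖)^2 := by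
      rw [hsq, hexp, mul_pow, hc2]
      nlinarith [hints1, hints2, hints3]
    have h := Real.sqrt_le_sqrt hineq
    rwa [Real.sqrt_sq (by positivity), Real.sqrt_sq habs0] at h
  · rw [habs]
    have hineq : (Real.sqrt (1 - q) * ρ)^2
        ≤ (‖((ρ:ℂ) * Complex.exp (Complex.I * (t:ℂ))) + (σ:ℂ)‖)^2 := by
      rw [hsq, hexp, mul_pow, hc2]
      nlinarith [hints1, hints2, hints4]
    have h := Real.sqrt_le_sqrt hineq
    rwa [Real.sqrt_sq (by positivity), Real.sqrt_sq habs0] at h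

set_option maxHeartbeats 1000000 in
lemma sector_measurable {ν δ : ℝ} (hδ₀ : 0 < δ) : MeasurableSet (sector ν δ) := by
  have hπ := Real.pi_pos
  have hchar : sector ν δ
      = {w : ℂ | ‖w‖ < (2:ℝ)^ν ∧ |Complex.arg w| < π*(1-δ) ∧ w ≠ 0} := by
    ext w
    constructor
    · rintro ⟨ρ, t, hρ0, hρR, ht, rfl⟩
      have hexp1 : ‖Complex.exp (Complex.I * (t:ℂ))‖ = 1 := by
        rw [Complex.norm_exp]
        simp [Complex.mul_re]
      have habs : ‖(ρ:ℂ) * Complex.exp (Complex.I * (t:ℂ))‖ = ρ := by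
        rw [norm_mul, Complex.norm_real, Real.norm_eq_abs, hexp1, mul_one, abs_of_pos hρ0]
      have htpi : |t| < π := by nlinarith
      have harg : Complex.arg ((ρ:ℂ) * Complex.exp (Complex.I * (t:ℂ))) = t := by
        rw [mul_comm Complex.I ((t:ℂ)), Complex.exp_mul_I]
        rw [Complex.arg_real_mul _ hρ0]
        have habslt := abs_lt.1 htpi
        have hmem : t ∈ Set.Ioc (-π) π := ⟨by linarith [habslt.1], by linarith [habslt.2]⟩
        exact Complex.arg_cos_add_sin_mul_I hmem
      refine ⟨by rw [habs]; exact hρR, by rw [harg]; exact ht, ?_⟩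
      intro h0
      rw [h0] at habs
      simp at habs
      linarith
    · rintro ⟨habs, harg, hne⟩
      refine ⟨‖w‖, Complex.arg w, norm_pos_iff.mpr hne, habs, harg, ?_⟩
      rw [mul_comm Complex.I]
      exact (Complex.norm_mul_exp_arg_mul_I w).symm
  rw [hchar]
  have h1 : MeasurableSet {w : ℂ | ‖w‖ < (2:ℝ)^ν} :=
    measurableSet_lt continuous_norm.measurable measurable_const
  have h2 : MeasurableSet {w : ℂ | |Complex.arg w| < π*(1-δ)} :=
    measurableSet_lt Complex.measurable_arg.abs measurable_const
  have h3 : MeasurableSet {w : ℂ | w ≠ (0:ℂ)} := by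
    have : {w : ℂ | w ≠ (0:ℂ)} = ({(0:ℂ)} : Set ℂ)ᶜ := by ext; simp
    rw [this]
    exact (measurableSet_singleton 0).compl
  have : {w : ℂ | ‖w‖ < (2:ℝ)^ν ∧ |Complex.arg w| < π*(1-δ) ∧ w ≠ 0}
      = {w : ℂ | ‖w‖ < (2:ℝ)^ν} ∩ ({w : ℂ | |Complex.arg w| < π*(1-δ)} ∩ {w : ℂ | w ≠ 0}) := by
    ext; simp [and_assoc]
  rw [this]
  exact h1.inter (h2.inter h3)

end SectorAux

open SectorAux in
set_option maxHeartbeats 1600000 in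
/-- There are polynomials with value `1` at the origin and arbitrarily small weighted
Bergman norm on the sector `S`. -/
theorem exists_poly_small_weighted_norm (ν δ : ℝ) (hν₀ : 0 < ν) (hν₁ : ν < 1)
    (hδ₀ : 0 < δ) (hδ₁ : δ < 1 / 2) (ε : ℝ) (hε : 0 < ε) :
    ∃ P : Polynomial ℂ, P.eval 0 = 1 ∧
      (∫ w in sector ν δ,
          ‖P.eval w‖ ^ 2 * ‖w‖ ^ (2 * (1 / ν - 1))) < ε := by
  have hπ := Real.pi_pos
  -- basic constants
  set q : ℝ := Real.cos (π * δ) with hq_def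
  have hq0 : 0 ≤ q := by
    apply Real.cos_nonneg_of_mem_Icc
    constructor <;> nlinarith
  have hq1 : q < 1 := by
    have h := Real.cos_lt_cos_of_nonneg_of_le_pi (le_refl (0:ℝ)) (by nlinarith : π*δ ≤ π)
      (by nlinarith : (0:ℝ) < π*δ)
    simpa using h
  set c : ℝ := Real.sqrt (1 - q) with hc_def
  have hc0 : 0 < c := Real.sqrt_pos.2 (by linarith)
  have hc2 : c^2 = 1 - q := Real.sq_sqrt (by linarith)
  have hc1 : c ≤ 1 := by nlinarith
  set R : ℝ := (2:ℝ)^ν with hR_def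
  have hR0 : 0 < R := Real.rpow_pos_of_pos (by norm_num) ν
  have hR1 : 1 ≤ R := by
    have h := Real.rpow_le_rpow_of_exponent_le (by norm_num : (1:ℝ) ≤ 2) hν₀.le
    simpa using h
  have hα0 : 0 < 1/ν - 1 := by
    have h1 : 1 < 1/ν := by
      rw [lt_div_iff₀ hν₀]
      linarith
    linarith
  have he0 : (0:ℝ) < 2*(1/ν - 1) := by linarith
  set RA : ℝ := R ^ (2*(1/ν-1)) with hRA_def
  have hRA1 : 1 ≤ RA := by
    rw [hRA_def]
    calc (1:ℝ) = R^(0:ℝ) := (Real.rpow_zero R).symm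
      _ ≤ R^(2*(1/ν-1)) := Real.rpow_le_rpow_of_exponent_le hR1 he0.le
  have hRA0 : 0 < RA := lt_of_lt_of_le one_pos hRA1
  -- the approximation region
  set K : Set ℂ := sector ν δ ∪ {0} with hK_def
  have hK1 : ∀ w ∈ K, ‖w‖ ≤ R := by
    intro w hw
    rcases hw with hw | hw
    · exact (sector_facts hδ₀ hδ₁ hw).1.le
    · rw [Set.mem_singleton_iff] at hw
      rw [hw]
      simp
      linarith
  have hK2 : ∀ σ : ℝ, 0 < σ → ∀ w ∈ K, c * σ ≤ ‖w + (σ:ℂ)‖ := by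
    intro σ hσ w hw
    rcases hw with hw | hw
    · exact ((sector_facts hδ₀ hδ₁ hw).2.2 σ hσ).1
    · rw [Set.mem_singleton_iff] at hw
      rw [hw, zero_add, Complex.norm_real, Real.norm_eq_abs, abs_of_pos hσ]
      nlinarith
  -- measure-theoretic constants
  set V : ℝ := (volume (Metric.closedBall (0:ℂ) R)).toReal with hV_def
  have hV0 : 0 ≤ V := ENNReal.toReal_nonneg
  set τ : ℝ := ε / (16 * RA * (c⁻¹^2 + 1) * (V + 1)) with hτ_def
  have hτ0 : 0 < τ := by
    apply div_pos hε
    positivity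
  set γ : ℝ := min (1/ν - 1) 1 with hγ_def
  have hγ0 : 0 < γ := lt_min hα0 one_pos
  have hγ1 : γ ≤ 1 := min_le_right _ _
  have hγα : γ ≤ 1/ν - 1 := min_le_left _ _
  set s : ℝ := min 1 (τ ^ (1/γ)) with hs_def
  have hs0 : 0 < s := lt_min one_pos (Real.rpow_pos_of_pos hτ0 _)
  have hs1 : s ≤ 1 := min_le_left _ _
  have hsγ : s ^ γ ≤ τ := by
    have h1 : s ^ γ ≤ (τ ^ (1/γ)) ^ γ :=
      Real.rpow_le_rpow hs0.le (min_le_right _ _) hγ0.le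
    have h2 : (τ ^ (1/γ)) ^ γ = τ := by
      rw [← Real.rpow_mul hτ0.le, one_div, inv_mul_cancel₀ hγ0.ne', Real.rpow_one]
    rw [h2] at h1
    exact h1
  set η : ℝ := min 2⁻¹ (Real.sqrt τ) with hη_def
  have hη0 : 0 < η := lt_min (by norm_num) (Real.sqrt_pos.2 hτ0)
  have hη2 : η ≤ 1/2 := by
    have := min_le_left (2⁻¹:ℝ) (Real.sqrt τ)
    rw [hη_def]
    norm_num
  have hητ : η^2 ≤ τ := by
    have h1 : η ≤ Real.sqrt τ := min_le_right _ _
    have h2 : η^2 ≤ Real.sqrt τ ^ 2 := pow_le_pow_left₀ hη0.le h1 2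
    rwa [Real.sq_sqrt hτ0.le] at h2
  -- polynomial approximation of s/(w+s)
  have happx : SApprox K (fun w => ((s:ℝ):ℂ) * (w + ((s:ℝ):ℂ))⁻¹) :=
    sapprox_const_mul _ (sapprox_inv hc0 hc1 hR1 hK1 hK2 s hs0)
  obtain ⟨P₀, hP₀⟩ := happx η hη0
  have h0K : (0:ℂ) ∈ K := Or.inr rfl
  set a : ℂ := P₀.eval 0 with ha_def
  have hsne : ((s:ℝ):ℂ) ≠ 0 := by
    simpa using hs0.ne'
  have hf0 : ((s:ℝ):ℂ) * ((0:ℂ) + ((s:ℝ):ℂ))⁻¹ = 1 := by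
    rw [zero_add, mul_inv_cancel₀ hsne]
  have ha1 : ‖1 - a‖ ≤ η := by
    simpa [zero_add, mul_inv_cancel₀ hsne] using hP₀ 0 h0K
  have ha : 1/2 ≤ ‖a‖ := by
    have htr := norm_add_le (1 - a) a
    simp only [sub_add_cancel] at htr
    have h1 : ‖(1:ℂ)‖ = 1 := by simp
    rw [h1] at htr
    linarith
  have ha0 : a ≠ 0 := by
    intro h
    rw [h] at ha
    simp at ha
    linarith
  refine ⟨Polynomial.C a⁻¹ * P₀, ?_, ?_⟩
  · rw [Polynomial.eval_mul, Polynomial.eval_C, ← ha_def, inv_mul_cancel₀ ha0]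
  -- the integral estimate
  set Cb : ℝ := 8 * RA * (c⁻¹^2 + 1) * τ with hCb_def
  have hCb0 : 0 ≤ Cb := by positivity
  -- pointwise bound
  have hpt : ∀ w ∈ sector ν δ,
      ‖(Polynomial.C a⁻¹ * P₀).eval w‖ ^ 2 * ‖w‖ ^ (2*(1/ν-1)) ≤ Cb := by
    intro w hw
    obtain ⟨hρR, hρ0, hgeom⟩ := sector_facts hδ₀ hδ₁ hw
    obtain ⟨hA1, hA2⟩ := hgeom s hs0
    set ρ : ℝ := ‖w‖ with hρ_def
    set A : ℝ := ‖w + ((s:ℝ):ℂ)‖ with hA_def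
    have hA0 : 0 < A := lt_of_lt_of_le (by positivity) hA1
    have hF : ‖((s:ℝ):ℂ) * (w + ((s:ℝ):ℂ))⁻¹‖ = s / A := by
      rw [norm_mul, norm_inv, Complex.norm_real, Real.norm_eq_abs, abs_of_pos hs0, div_eq_mul_inv]
    -- bound on the normalized polynomial
    have hPw : ‖(Polynomial.C a⁻¹ * P₀).eval w‖ ≤ 2 * (s/A + η) := by
      rw [Polynomial.eval_mul, Polynomial.eval_C, norm_mul, norm_inv]
      have h1 : ‖P₀.eval w‖ ≤ s/A + η := by
        have htr := norm_add_le
          (P₀.eval w - ((s:ℝ):ℂ) * (w + ((s:ℝ):ℂ))⁻¹) (((s:ℝ):ℂ) * (w + ((s:ℝ):ℂ))⁻¹)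
        rw [sub_add_cancel] at htr
        have h2 := hP₀ w (Or.inl hw)
        rw [norm_sub_rev] at h2
        rw [hF] at htr
        linarith
      have h2 : (‖a‖)⁻¹ ≤ 2 := by
        rw [show (2:ℝ) = (2⁻¹:ℝ)⁻¹ by norm_num]
        apply inv_anti₀ (by norm_num)
        rw [show (2⁻¹:ℝ) = 1/2 by norm_num]
        exact ha
      exact mul_le_mul h2 h1 (norm_nonneg _) (by norm_num)
    -- claim A : the weighted square of s/(w+s) is small
    have claimA : (s/A)^2 * ρ ^ (2*(1/ν-1)) ≤ c⁻¹^2 * RA * s ^ γ := by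
      have hρnn : 0 ≤ ρ := hρ0.le
      rcases le_or_gt ρ (Real.sqrt s) with hcase | hcase
      · -- near the origin
        have h1 : s/A ≤ c⁻¹ := by
          rw [div_le_iff₀ hA0]
          calc s = c⁻¹ * (c * s) := by field_simp
            _ ≤ c⁻¹ * A := mul_le_mul_of_nonneg_left hA1 (by positivity)
        have h1' : (s/A)^2 ≤ c⁻¹^2 := pow_le_pow_left₀ (by positivity) h1 2
        have h2 : ρ ^ (2*(1/ν-1)) ≤ s ^ γ := by
          calc ρ ^ (2*(1/ν-1)) ≤ (Real.sqrt s) ^ (2*(1/ν-1)) :=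
                Real.rpow_le_rpow hρnn hcase he0.le
            _ = s ^ (1/ν - 1) := by
                rw [Real.sqrt_eq_rpow, ← Real.rpow_mul hs0.le]
                congr 1
                ring
            _ ≤ s ^ γ := Real.rpow_le_rpow_of_exponent_ge hs0 hs1 hγα
        calc (s/A)^2 * ρ ^ (2*(1/ν-1)) ≤ c⁻¹^2 * (s ^ γ) := by
              apply mul_le_mul h1' h2 (Real.rpow_nonneg hρnn _) (by positivity)
          _ ≤ c⁻¹^2 * RA * s ^ γ := by
              have hsγ0 : 0 ≤ s ^ γ := Real.rpow_nonneg hs0.le _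
              have hstep : c⁻¹^2 * 1 ≤ c⁻¹^2 * RA :=
                mul_le_mul_of_nonneg_left hRA1 (sq_nonneg c⁻¹)
              calc c⁻¹^2 * (s ^ γ) = (c⁻¹^2 * 1) * s ^ γ := by ring
                _ ≤ (c⁻¹^2 * RA) * s ^ γ := mul_le_mul_of_nonneg_right hstep hsγ0
                _ = c⁻¹^2 * RA * s ^ γ := by ring
      · -- away from the origin
        have hsρ : s ≤ ρ^2 := by
          have h2 : (Real.sqrt s)^2 ≤ ρ^2 := pow_le_pow_left₀ (Real.sqrt_nonneg s) hcase.le 2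
          rwa [Real.sq_sqrt hs0.le] at h2
        have hden : c^2 * s ≤ A^2 := by
          have h1 : (c*ρ)^2 ≤ A^2 := pow_le_pow_left₀ (by positivity) hA2 2
          calc c^2 * s ≤ c^2 * ρ^2 := mul_le_mul_of_nonneg_left hsρ (sq_nonneg c)
            _ = (c*ρ)^2 := by ring
            _ ≤ A^2 := h1
        have h1 : (s/A)^2 ≤ c⁻¹^2 * s := by
          rw [div_pow]
          calc s^2/A^2 ≤ s^2/(c^2*s) := by
                apply div_le_div_of_nonneg_left (sq_nonneg s) (by positivity) hden
            _ = c⁻¹^2 * s := by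
                field_simp
        have h2 : ρ ^ (2*(1/ν-1)) ≤ RA := by
          rw [hRA_def]
          exact Real.rpow_le_rpow hρnn hρR.le he0.le
        have h3 : s ≤ s ^ γ := by
          calc s = s^(1:ℝ) := (Real.rpow_one s).symm
            _ ≤ s^γ := Real.rpow_le_rpow_of_exponent_ge hs0 hs1 hγ1
        calc (s/A)^2 * ρ ^ (2*(1/ν-1)) ≤ (c⁻¹^2 * s) * RA := by
              apply mul_le_mul h1 h2 (Real.rpow_nonneg hρnn _) (by positivity)
          _ = c⁻¹^2 * RA * s := by ring
          _ ≤ c⁻¹^2 * RA * s ^ γ := by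
              apply mul_le_mul_of_nonneg_left h3 (by positivity)
    -- combine
    have hρRA : ρ ^ (2*(1/ν-1)) ≤ RA := by
      rw [hRA_def]
      exact Real.rpow_le_rpow hρ0.le hρR.le he0.le
    have hρe0 : 0 ≤ ρ ^ (2*(1/ν-1)) := Real.rpow_nonneg hρ0.le _
    have hsq : ‖(Polynomial.C a⁻¹ * P₀).eval w‖ ^ 2 ≤ (2*(s/A + η))^2 :=
      pow_le_pow_left₀ (norm_nonneg _) hPw 2
    have hsq2 : (2*(s/A + η))^2 ≤ 8*(s/A)^2 + 8*η^2 := by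
      calc (2*(s/A + η))^2 = 8*(s/A)^2 + 8*η^2 - 4*((s/A) - η)^2 := by ring
        _ ≤ 8*(s/A)^2 + 8*η^2 := by linarith [sq_nonneg ((s/A) - η)]
    calc ‖(Polynomial.C a⁻¹ * P₀).eval w‖ ^ 2 * ρ ^ (2*(1/ν-1))
        ≤ (8*(s/A)^2 + 8*η^2) * ρ ^ (2*(1/ν-1)) := by
          apply mul_le_mul_of_nonneg_right (le_trans hsq hsq2) hρe0
      _ = 8*((s/A)^2 * ρ ^ (2*(1/ν-1))) + 8*η^2 * ρ ^ (2*(1/ν-1)) := by ring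
      _ ≤ 8*(c⁻¹^2 * RA * s ^ γ) + 8*η^2 * RA := by
          have h1 : 8*((s/A)^2 * ρ ^ (2*(1/ν-1))) ≤ 8*(c⁻¹^2 * RA * s ^ γ) := by
            linarith [claimA]
          have h2 : 8*η^2 * ρ ^ (2*(1/ν-1)) ≤ 8*η^2 * RA := by
            apply mul_le_mul_of_nonneg_left hρRA (by positivity)
          linarith
      _ ≤ 8*(c⁻¹^2 * RA * τ) + 8*τ*RA := by
          have h1 : 8*(c⁻¹^2 * RA * s ^ γ) ≤ 8*(c⁻¹^2 * RA * τ) := by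
            have h := mul_le_mul_of_nonneg_left hsγ (by positivity : (0:ℝ) ≤ 8*(c⁻¹^2*RA))
            calc 8*(c⁻¹^2 * RA * s ^ γ) = 8*(c⁻¹^2*RA) * s ^ γ := by ring
              _ ≤ 8*(c⁻¹^2*RA) * τ := h
              _ = 8*(c⁻¹^2 * RA * τ) := by ring
          have h2 : 8*η^2*RA ≤ 8*τ*RA := by
            apply mul_le_mul_of_nonneg_right _ hRA0.le
            linarith
          linarith
      _ = Cb := by rw [hCb_def]; ring
  -- integrability
  have hsub : sector ν δ ⊆ Metric.closedBall (0:ℂ) R := by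
    intro w hw
    rw [Metric.mem_closedBall, Complex.dist_eq, sub_zero]
    exact (sector_facts hδ₀ hδ₁ hw).1.le
  have hmeas : MeasurableSet (sector ν δ) := sector_measurable hδ₀
  have hcont : Continuous (fun w : ℂ =>
      ‖(Polynomial.C a⁻¹ * P₀).eval w‖ ^ 2 * ‖w‖ ^ (2*(1/ν-1))) := by
    apply Continuous.mul
    · exact (continuous_norm.comp (Polynomial.continuous _)).pow 2
    · exact (Real.continuous_rpow_const he0.le).comp continuous_norm
  have hIntS : IntegrableOn (fun w : ℂ =>
      ‖(Polynomial.C a⁻¹ * P₀).eval w‖ ^ 2 * ‖w‖ ^ (2*(1/ν-1)))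
      (sector ν δ) volume := by
    apply IntegrableOn.mono_set _ hsub
    exact hcont.continuousOn.integrableOn_compact (isCompact_closedBall 0 R)
  have hfin : volume (sector ν δ) < ⊤ :=
    lt_of_le_of_lt (measure_mono hsub) measure_closedBall_lt_top
  have hIntC : IntegrableOn (fun _ : ℂ => Cb) (sector ν δ) volume :=
    integrableOn_const hfin.ne
  have hint1 := setIntegral_mono_on hIntS hIntC hmeas hpt
  rw [setIntegral_const] at hint1
  have hμ : (volume (sector ν δ)).toReal ≤ V := by
    rw [hV_def]
    exact ENNReal.toReal_mono measure_closedBall_lt_top.ne (measure_mono hsub)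
  calc (∫ w in sector ν δ,
        ‖(Polynomial.C a⁻¹ * P₀).eval w‖ ^ 2 * ‖w‖ ^ (2*(1/ν-1)))
      ≤ (volume (sector ν δ)).toReal • Cb := hint1
    _ = (volume (sector ν δ)).toReal * Cb := by rw [smul_eq_mul]
    _ ≤ (V+1) * Cb := by
        apply mul_le_mul_of_nonneg_right _ hCb0
        linarith
    _ = ε / 2 := by
        rw [hCb_def, hτ_def]
        field_simp
        ring
    _ < ε := by linarith
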